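/- In the construction Ẽ = (A₂ ∪ E) \ A₁ with A₁ = {x : ∃r>0, |E ∩ B_r(x)| = 0} and A₂ = {x : ∃r>0, |E ∩ B_r(x)| = ω_n rⁿ}, the sets A₁ and A₂ are open and disjoint, |E ∩ A₁| = 0, and |A₂ \ E| = 0. -/

import Mathlib

open MeasureTheory Metric Set Filter
open scoped ENNReal Topology

/-- In the construction `Ẽ = (A₂ ∪ E) \ A₁`, with
`A₁ = {x : ∃ r > 0, |E ∩ B_r(x)| = 0}` and `A₂ = {x : ∃ r > 0, |E ∩ B_r(x)| = ωₙ rⁿ}`,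
the sets `A₁, A₂` are open and disjoint, `|E ∩ A₁| = 0` and `|A₂ \ E| = 0`. -/
theorem stmt_6 {n : ℕ} (E : Set (EuclideanSpace ℝ (Fin n))) (hE : MeasurableSet E)
    (A1 A2 : Set (EuclideanSpace ℝ (Fin n)))
    (hA1 : A1 = {x | ∃ r > (0:ℝ), volume (E ∩ ball x r) = 0})
    (hA2 : A2 = {x | ∃ r > (0:ℝ), volume (E ∩ ball x r) = volume (ball x r)}) :
    IsOpen A1 ∧ IsOpen A2 ∧ Disjoint A1 A2 ∧
      volume (E ∩ A1) = 0 ∧ volume (A2 \ E) = 0 := by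
  -- key reformulation for A2 points
  have hball : ∀ (x : EuclideanSpace ℝ (Fin n)) (r : ℝ), 0 < r →
      (volume (E ∩ ball x r) = volume (ball x r) ↔ volume (ball x r \ E) = 0) := by
    intro x r hr
    have hfin : volume (ball x r) ≠ ⊤ := measure_ball_lt_top.ne
    have hsplit : volume (ball x r ∩ E) + volume (ball x r \ E) = volume (ball x r) :=
      measure_inter_add_diff _ hE
    constructor
    · intro h
      rw [Set.inter_comm, h] at hsplit
      exact (ENNReal.add_right_inj hfin).1 (by rw [hsplit, add_zero])
    · intro h
      rw [h, add_zero] at hsplit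
      rw [Set.inter_comm]; exact hsplit
  have hA1open : IsOpen A1 := by
    rw [hA1]
    rw [Metric.isOpen_iff]
    rintro x ⟨r, hr, hx⟩
    refine ⟨r / 2, by linarith, ?_⟩
    intro y hy
    refine ⟨r / 2, by linarith, ?_⟩
    have hsub : ball y (r / 2) ⊆ ball x r := by
      intro z hz
      have := dist_triangle z y x
      simp only [mem_ball] at *
      linarith
    exact le_antisymm (le_trans (measure_mono (Set.inter_subset_inter_right _ hsub))
      hx.le) zero_le
  have hA2open : IsOpen A2 := by
    rw [hA2]
    rw [Metric.isOpen_iff]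
    rintro x ⟨r, hr, hx⟩
    rw [hball x r hr] at hx
    refine ⟨r / 2, by linarith, ?_⟩
    intro y hy
    refine ⟨r / 2, by linarith, ?_⟩
    have hsub : ball y (r / 2) ⊆ ball x r := by
      intro z hz
      have := dist_triangle z y x
      simp only [mem_ball] at *
      linarith
    rw [hball y (r / 2) (by linarith)]
    exact le_antisymm (le_trans (measure_mono (Set.diff_subset_diff_left hsub)) hx.le)
      zero_le
  have hdisj : Disjoint A1 A2 := by
    rw [Set.disjoint_left]
    rintro x hx1 hx2
    rw [hA1] at hx1; rw [hA2] at hx2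
    obtain ⟨r1, hr1, h1⟩ := hx1
    obtain ⟨r2, hr2, h2⟩ := hx2
    rw [hball x r2 hr2] at h2
    set r := min r1 r2 with hrdef
    have hr : 0 < r := lt_min hr1 hr2
    have e1 : volume (E ∩ ball x r) = 0 :=
      le_antisymm (le_trans (measure_mono (Set.inter_subset_inter_right _
        (ball_subset_ball (min_le_left _ _)))) h1.le) zero_le
    have e2 : volume (ball x r \ E) = 0 :=
      le_antisymm (le_trans (measure_mono (Set.diff_subset_diff_left
        (ball_subset_ball (min_le_right _ _)))) h2.le) zero_le
    have : volume (ball x r) = 0 := by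
      have := measure_inter_add_diff (μ := volume) (ball x r) hE
      rw [Set.inter_comm] at e1
      rw [e1, e2] at this
      simpa using this.symm
    exact absurd this (measure_ball_pos volume x hr).ne'
  have hEA1 : volume (E ∩ A1) = 0 := by
    apply measure_null_of_locally_null
    rintro x ⟨hxE, hxA1⟩
    rw [hA1] at hxA1
    obtain ⟨r, hr, h⟩ := hxA1
    refine ⟨E ∩ ball x r, ?_, h⟩
    rw [mem_nhdsWithin]
    exact ⟨ball x r, isOpen_ball, mem_ball_self hr, fun z hz => ⟨hz.2.1, hz.1⟩⟩
  have hA2E : volume (A2 \ E) = 0 := by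
    apply measure_null_of_locally_null
    rintro x ⟨hxA2, hxE⟩
    rw [hA2] at hxA2
    obtain ⟨r, hr, h⟩ := hxA2
    rw [hball x r hr] at h
    refine ⟨ball x r \ E, ?_, h⟩
    rw [mem_nhdsWithin]
    exact ⟨ball x r, isOpen_ball, mem_ball_self hr, fun z hz => ⟨hz.1, hz.2.2⟩⟩
  exact ⟨hA1open, hA2open, hdisj, hEA1, hA2E⟩
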